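/- Let c = c^cr = 1/(4 log 2). For all constants T > 0, K > 0 and every ε > 0 there exists N₀ such that for every integer N ≥ N₀, every integer j with 1 ≤ j ≤ T·N^{4/3}, every nondecreasing sequence 𝐀 = (A₁ ⊆ A₂ ⊆ … ⊆ A_j) of subsets of V_N with |A_j| ≤ K·N^{4/3}, every a ∈ V_N and every b ∈ V_N ∖ (A_j ∪ {a}): Q(𝐀,j; a,b) ≤ (1 + ε)·max(4c²·(log N)/N², p(a,b)). -/

import Mathlib

open scoped BigOperators

/-- Vertices of the discrete 2-dimensional torus. -/
abbrev Vtx (N : ℕ) : Type := ZMod N × ZMod N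

/-- `ρ_N(i)`: for a residue represented in `{0,…,N−1}`, `ρ_N(i) = i` if `i ≤ N/2`
and `ρ_N(i) = N − i` otherwise. -/
def rhoN (N : ℕ) (i : ZMod N) : ℕ :=
  if 2 * i.val ≤ N then i.val else N - i.val

/-- Torus distance `ρ(u,v) = ρ_N(u₁ − v₁) + ρ_N(u₂ − v₂)`. -/
def torusDist (N : ℕ) (u v : Vtx N) : ℕ :=
  rhoN N (u.1 - v.1) + rhoN N (u.2 - v.2)

/-- Connection probability `p(u,v) = min(c/(N·ρ(u,v)), 1)` for `u ≠ v`, `p(u,u) = 0`. -/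
noncomputable def edgeProb (N : ℕ) (c : ℝ) (u v : Vtx N) : ℝ :=
  if u = v then 0 else min (c / ((N : ℝ) * (torusDist N u v : ℝ))) 1

/-- The critical value `c^cr = 1/(4 log 2)`. -/
noncomputable def ccr : ℝ := 1 / (4 * Real.log 2)

/-- `Z_{N,A}(u) = Σ_{v ∈ V_N∖A, v ≠ u} p(u,v)`. -/
noncomputable def ZNA (N : ℕ) [NeZero N] (c : ℝ) (A : Finset (Vtx N)) (u : Vtx N) : ℝ :=
  ∑ v ∈ (Finset.univ \ A).erase u, edgeProb N c u v

/-- Transition kernel of the chain avoiding `A`: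
`P_A(u,v) = p(u,v)/Z_{N,A}(u)` for `v ∉ A`, and `0` for `v ∈ A`. -/
noncomputable def transPA (N : ℕ) [NeZero N] (c : ℝ) (A : Finset (Vtx N))
    (u v : Vtx N) : ℝ :=
  if v ∈ A then 0 else edgeProb N c u v / ZNA N c A u

/-- Auxiliary recursion for the memory-walk kernel: `memQ i m H x b` is the sum over
paths of `m` further steps, starting from `x` at time `i` with history `H`, where the
`i`-th step uses the kernel `P_{A_i ∪ H}` (which vanishes on targets in `A_i ∪ H`). -/
noncomputable def memQ (N : ℕ) [NeZero N] (c : ℝ) (A : ℕ → Finset (Vtx N)) :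
    ℕ → ℕ → Finset (Vtx N) → Vtx N → Vtx N → ℝ
  | _, 0, _, x, b => if x = b then 1 else 0
  | i, m + 1, H, x, b =>
      ∑ y : Vtx N, transPA N c (A i ∪ H) x y * memQ N c A (i + 1) m (insert y H) y b

/-- The `k`-step memory-walk kernel `Q(𝐀,k;a,b)`: the sum over all tuples
`(u₂,…,u_k)` with `u_i ∉ A_{i−1} ∪ {a,u₂,…,u_{i−1}}` of
`P_{A₁∪{a}}(a,u₂)·P_{A₂∪{a,u₂}}(u₂,u₃)·…·P_{A_k∪{a,u₂,…,u_k}}(u_k,b)`. -/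
noncomputable def kernelQ (N : ℕ) [NeZero N] (c : ℝ) (A : ℕ → Finset (Vtx N))
    (k : ℕ) (a b : Vtx N) : ℝ :=
  memQ N c A 1 k {a} a b


section Basics
variable {N : ℕ} [NeZero N]

lemma two_mul_rhoN_le (i : ZMod N) : 2 * rhoN N i ≤ N := by
  unfold rhoN
  split_ifs with h
  · exact h
  · have := ZMod.val_lt i; omega

lemma rhoN_eq_zero_iff (i : ZMod N) : rhoN N i = 0 ↔ i = 0 := by
  unfold rhoN
  have hv := ZMod.val_lt i
  constructor
  · intro h
    split_ifs at h with h'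
    · exact (ZMod.val_eq_zero i).1 h
    · omega
  · intro h; subst h; simp [ZMod.val_zero]

lemma one_le_rhoN {i : ZMod N} (h : i ≠ 0) : 1 ≤ rhoN N i := by
  have := (rhoN_eq_zero_iff i).not.2 h; omega

lemma rhoN_neg (i : ZMod N) : rhoN N (-i) = rhoN N i := by
  rcases eq_or_ne i 0 with rfl | h
  · simp
  · have hv := ZMod.val_lt i
    have hv1 : 1 ≤ i.val := by
      have := (ZMod.val_eq_zero i).not.2 h; omega
    unfold rhoN
    rw [ZMod.neg_val, if_neg h]
    split_ifs with h1 h2 h3 <;> omega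

lemma one_le_torusDist {u v : Vtx N} (h : u ≠ v) : 1 ≤ torusDist N u v := by
  have : u.1 - v.1 ≠ 0 ∨ u.2 - v.2 ≠ 0 := by
    by_contra hc
    push_neg at hc
    exact h (Prod.ext (by have := hc.1; rwa [sub_eq_zero] at this)
      (by have := hc.2; rwa [sub_eq_zero] at this))
  unfold torusDist
  rcases this with h1 | h1
  · have := one_le_rhoN h1; omega
  · have := one_le_rhoN h1; omega

lemma torusDist_le (u v : Vtx N) : torusDist N u v ≤ N := by
  have h1 := two_mul_rhoN_le (N := N) (u.1 - v.1)
  have h2 := two_mul_rhoN_le (N := N) (u.2 - v.2)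
  unfold torusDist; omega

lemma torusDist_eq_sub (x v : Vtx N) : torusDist N x v = torusDist N (x - v) 0 := by
  simp [torusDist]

lemma torusDist_comm (u v : Vtx N) : torusDist N u v = torusDist N v u := by
  unfold torusDist
  rw [← rhoN_neg (u.1 - v.1), ← rhoN_neg (u.2 - v.2)]
  ring_nf

lemma log_two_pos' : (0:ℝ) < Real.log 2 := Real.log_pos (by norm_num)

lemma ccr_pos : (0:ℝ) < ccr := by
  unfold ccr; positivity

lemma ccr_lt_one : ccr < 1 := by
  unfold ccr
  rw [div_lt_one (by positivity)]
  have := Real.log_two_gt_d9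
  nlinarith

lemma ccr_mul : ccr * (4 * Real.log 2) = 1 := by
  unfold ccr
  field_simp

lemma edgeProb_nonneg {c : ℝ} (hc : 0 ≤ c) (u v : Vtx N) : 0 ≤ edgeProb N c u v := by
  unfold edgeProb
  split_ifs with h
  · exact le_refl 0
  · exact le_min (div_nonneg hc (by positivity)) zero_le_one

lemma edgeProb_eq {u v : Vtx N} (h : u ≠ v) :
    edgeProb N ccr u v = (ccr / N) * ((torusDist N u v : ℝ))⁻¹ := by
  unfold edgeProb
  rw [if_neg h]
  have hd : (1:ℝ) ≤ (torusDist N u v : ℝ) := by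
    exact_mod_cast one_le_torusDist h
  have hN : (1:ℝ) ≤ (N:ℝ) := by
    have := Nat.one_le_iff_ne_zero.2 (NeZero.ne N); exact_mod_cast this
  have h1 : ccr / ((N : ℝ) * (torusDist N u v : ℝ)) ≤ 1 := by
    rw [div_le_one (by nlinarith)]
    nlinarith [ccr_lt_one, ccr_pos]
  rw [min_eq_left h1, div_mul_eq_div_div, div_eq_mul_inv]

lemma edgeProb_le_inv (u v : Vtx N) :
    edgeProb N ccr u v ≤ (ccr / N) * ((torusDist N u v : ℝ))⁻¹ := by
  rcases eq_or_ne u v with rfl | h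
  · unfold edgeProb
    rw [if_pos rfl]
    have : (0:ℝ) ≤ (ccr / N) * ((torusDist N u u : ℝ))⁻¹ := by
      have := ccr_pos
      positivity
    exact this
  · exact (edgeProb_eq h).le

lemma edgeProb_le_const (u v : Vtx N) : edgeProb N ccr u v ≤ ccr / N := by
  have hN : (0:ℝ) < (N:ℝ) := by exact_mod_cast Nat.pos_of_ne_zero (NeZero.ne N)
  have hc := ccr_pos
  unfold edgeProb
  split_ifs with h
  · positivity
  · refine (min_le_left _ _).trans ?_
    have hd : (1:ℝ) ≤ (torusDist N u v : ℝ) := by exact_mod_cast one_le_torusDist h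
    exact div_le_div_of_nonneg_left hc.le hN (by nlinarith)
end Basics

open Finset

section Counting
variable {N : ℕ} [NeZero N]

/-- fiber of rhoN -/
lemma card_rho_fiber (s : ℕ) :
    (univ.filter (fun i : ZMod N => rhoN N i = s)).card ≤ 2 := by
  classical
  have hsub : (univ.filter (fun i : ZMod N => rhoN N i = s)) ⊆ {(s : ZMod N), -(s : ZMod N)} := by
    intro i hi
    rw [mem_filter] at hi
    have hv := ZMod.val_lt i
    have h := hi.2
    unfold rhoN at h
    split_ifs at h with h'
    · subst h
      simp [mem_insert, ZMod.natCast_val, ZMod.cast_id]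
    · have hsN : s ≤ N := by omega
      have hval : i.val = N - s := by omega
      have hi2 : i = ((N - s : ℕ) : ZMod N) := by
        rw [← hval]
        exact (ZMod.natCast_rightInverse i).symm
      have : i = -(s : ZMod N) := by
        rw [hi2, Nat.cast_sub hsN, ZMod.natCast_self, zero_sub]
      simp [mem_insert, this]
  calc _ ≤ ({(s : ZMod N), -(s : ZMod N)} : Finset (ZMod N)).card := card_le_card hsub
    _ ≤ 2 := card_insert_le _ _ |>.trans (by simp)

lemma dd_eq (w : Vtx N) : torusDist N w 0 = rhoN N w.1 + rhoN N w.2 := by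
  simp [torusDist]

/-- fiber of the distance-to-zero function -/
lemma card_dist_fiber (r : ℕ) :
    (univ.filter (fun w : Vtx N => torusDist N w 0 = r)).card ≤ 4 * (r + 1) := by
  classical
  have hsub : (univ.filter (fun w : Vtx N => torusDist N w 0 = r)) ⊆
      (range (r+1)).biUnion (fun s =>
        (univ.filter (fun i : ZMod N => rhoN N i = s)) ×ˢ
        (univ.filter (fun i : ZMod N => rhoN N i = r - s))) := by
    intro w hw
    rw [mem_filter] at hw
    have h := hw.2
    rw [dd_eq] at h
    rw [mem_biUnion]
    exact ⟨rhoN N w.1, by rw [mem_range]; omega,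
      by rw [mem_product, mem_filter, mem_filter]
         exact ⟨⟨mem_univ _, rfl⟩, mem_univ _, by omega⟩⟩
  refine (card_le_card hsub).trans ((card_biUnion_le).trans ?_)
  calc ∑ s ∈ range (r+1), ((univ.filter (fun i : ZMod N => rhoN N i = s)) ×ˢ
        (univ.filter (fun i : ZMod N => rhoN N i = r - s))).card
      ≤ ∑ _s ∈ range (r+1), 4 := by
        refine sum_le_sum fun s _ => ?_
        rw [card_product]
        calc _ ≤ 2 * 2 := Nat.mul_le_mul (card_rho_fiber s) (card_rho_fiber (r - s))
          _ = 4 := rfl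
    _ = 4 * (r + 1) := by rw [sum_const, card_range]; ring

/-- The punctured torus is covered by distance fibers with radii in `Icc 1 N`. -/
lemma erase_subset_biUnion_fibers :
    (univ : Finset (Vtx N)).erase 0 ⊆
      (Icc 1 N).biUnion (fun r => univ.filter (fun w : Vtx N => torusDist N w 0 = r)) := by
  intro w hw
  rw [mem_erase] at hw
  rw [mem_biUnion]
  refine ⟨torusDist N w 0, ?_, by simp⟩
  rw [mem_Icc]
  exact ⟨one_le_torusDist hw.1, torusDist_le _ _⟩

/-- Generic fiberwise upper bound for sums of `g ∘ dist` over the punctured torus. -/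
lemma sum_dist_le (g : ℕ → ℝ) (hg : ∀ r, 0 ≤ g r) :
    ∑ w ∈ (univ : Finset (Vtx N)).erase 0, g (torusDist N w 0)
      ≤ ∑ r ∈ Icc 1 N, (4 * (r + 1) : ℝ) * g r := by
  classical
  have hdisj : Set.PairwiseDisjoint ↑(Icc 1 N)
      (fun r => univ.filter (fun w : Vtx N => torusDist N w 0 = r)) := by
    intro r _ r' _ hne
    refine Finset.disjoint_left.2 fun w hw hw' => ?_
    rw [mem_filter] at hw hw'
    exact hne (hw.2 ▸ hw'.2.symm ▸ rfl)
  calc ∑ w ∈ (univ : Finset (Vtx N)).erase 0, g (torusDist N w 0)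
      ≤ ∑ w ∈ (Icc 1 N).biUnion (fun r => univ.filter (fun w : Vtx N => torusDist N w 0 = r)),
          g (torusDist N w 0) :=
        sum_le_sum_of_subset_of_nonneg erase_subset_biUnion_fibers (fun _ _ _ => hg _)
    _ = ∑ r ∈ Icc 1 N, ∑ w ∈ univ.filter (fun w : Vtx N => torusDist N w 0 = r),
          g (torusDist N w 0) := sum_biUnion hdisj
    _ ≤ ∑ r ∈ Icc 1 N, (4 * (r + 1) : ℝ) * g r := by
        refine sum_le_sum fun r _ => ?_
        have : ∑ w ∈ univ.filter (fun w : Vtx N => torusDist N w 0 = r),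
            g (torusDist N w 0) = ∑ _w ∈ univ.filter (fun w : Vtx N => torusDist N w 0 = r), g r := by
          refine sum_congr rfl fun w hw => ?_
          rw [mem_filter] at hw
          rw [hw.2]
        rw [this, sum_const, nsmul_eq_mul]
        have hcard : ((univ.filter (fun w : Vtx N => torusDist N w 0 = r)).card : ℝ) ≤ 4 * ((r:ℝ)+1) := by
          exact_mod_cast card_dist_fiber (N := N) r
        nlinarith [hg r]

end Counting

section Harmonic

lemma sum_inv_le_log (n : ℕ) : ∑ r ∈ Icc 1 n, ((r:ℝ))⁻¹ ≤ 1 + Real.log n := by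
  induction n with
  | zero => simp
  | succ n ih =>
    rcases Nat.eq_zero_or_pos n with rfl | hn
    · norm_num
    · rw [sum_Icc_succ_top (by omega)]
      have hlog : ((n:ℝ)+1)⁻¹ ≤ Real.log (n+1) - Real.log n := by
        have hx : (0:ℝ) < (n:ℝ) / (n+1) := by positivity
        have := Real.log_le_sub_one_of_pos hx
        rw [Real.log_div (by positivity) (by positivity)] at this
        have hne : ((n:ℝ)+1) ≠ 0 := by positivity
        have : Real.log n - Real.log (n+1) ≤ (n:ℝ)/(n+1) - 1 := this
        have heq : (n:ℝ)/(n+1) - 1 = -((n:ℝ)+1)⁻¹ := by field_simp; ring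
        linarith [heq ▸ this]
      push_cast
      push_cast at ih
      linarith

lemma sum_inv_sq_le (n : ℕ) : ∑ r ∈ Icc 1 n, (((r:ℝ))⁻¹)^2 ≤ 2 := by
  have key : ∀ n : ℕ, 1 ≤ n → ∑ r ∈ Icc 1 n, (((r:ℝ))⁻¹)^2 ≤ 2 - (n:ℝ)⁻¹ := by
    intro n hn
    induction n with
    | zero => omega
    | succ n ih =>
      rcases Nat.eq_zero_or_pos n with rfl | hn'
      · norm_num
      · rw [sum_Icc_succ_top (by omega)]
        have h2 : (((n:ℝ)+1)⁻¹)^2 ≤ (n:ℝ)⁻¹ - ((n:ℝ)+1)⁻¹ := by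
          have hn0 : (0:ℝ) < n := by exact_mod_cast hn'
          have : (n:ℝ)⁻¹ - ((n:ℝ)+1)⁻¹ = ((n:ℝ)*((n:ℝ)+1))⁻¹ := by
            field_simp
            ring
          rw [this, pow_two]
          have h1 : (0:ℝ) < (n:ℝ)+1 := by positivity
          have h2 : (0:ℝ) < (n:ℝ)*((n:ℝ)+1) := by positivity
          rw [← mul_inv]
          apply inv_anti₀ h2
          nlinarith
        have := ih hn'
        push_cast at *
        linarith
  rcases Nat.eq_zero_or_pos n with rfl | hn
  · simp
  · have := key n hn
    have h0 : (0:ℝ) ≤ (n:ℝ)⁻¹ := by positivity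
    linarith

end Harmonic

section Translate
variable {N : ℕ} [NeZero N]

lemma sum_erase_translate (x : Vtx N) (f : ℕ → ℝ) :
    ∑ v ∈ (univ : Finset (Vtx N)).erase x, f (torusDist N x v)
      = ∑ w ∈ (univ : Finset (Vtx N)).erase 0, f (torusDist N w 0) := by
  classical
  refine Finset.sum_nbij' (fun v => x - v) (fun w => x - w) ?_ ?_ ?_ ?_ ?_
  · intro v hv
    rw [mem_erase] at hv ⊢
    exact ⟨sub_ne_zero.2 (fun h => hv.1 h.symm), mem_univ _⟩
  · intro w hw
    rw [mem_erase] at hw ⊢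
    refine ⟨fun h => hw.1 (sub_eq_self.1 h), mem_univ _⟩
  · intro v _; exact sub_sub_cancel x v
  · intro w _; exact sub_sub_cancel x w
  · intro v _
    rw [torusDist_eq_sub]

/-- Second-moment-type bound: `∑_{w≠0} (1/dist)² ≤ 4 log N + 12`. -/
lemma sum_inv_sq_dist_le :
    ∑ w ∈ (univ : Finset (Vtx N)).erase 0, (((torusDist N w 0 : ℝ))⁻¹)^2
      ≤ 4 * Real.log N + 12 := by
  have h1 : ∑ w ∈ (univ : Finset (Vtx N)).erase 0, (((torusDist N w 0 : ℝ))⁻¹)^2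
      ≤ ∑ r ∈ Icc 1 N, (4 * ((r:ℝ) + 1)) * (((r:ℝ))⁻¹)^2 :=
    sum_dist_le (fun r => (((r:ℝ))⁻¹)^2) (fun r => by positivity)
  refine h1.trans ?_
  have h2 : ∀ r ∈ Icc 1 N, (4 * ((r:ℝ) + 1)) * (((r:ℝ))⁻¹)^2
      ≤ 4 * ((r:ℝ))⁻¹ + 4 * (((r:ℝ))⁻¹)^2 := by
    intro r hr
    rw [mem_Icc] at hr
    have hr1 : (1:ℝ) ≤ (r:ℝ) := by exact_mod_cast hr.1
    have hr0 : (0:ℝ) < (r:ℝ) := by linarith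
    have hinv : ((r:ℝ))⁻¹ ≤ 1 := by rw [inv_le_one_iff₀]; right; exact hr1
    have hinv0 : (0:ℝ) ≤ ((r:ℝ))⁻¹ := by positivity
    push_cast
    have : ((r:ℝ)) * (((r:ℝ))⁻¹)^2 = ((r:ℝ))⁻¹ := by
      field_simp [pow_two]
    nlinarith [sq_nonneg ((r:ℝ))⁻¹]
  refine (sum_le_sum h2).trans ?_
  rw [sum_add_distrib, ← mul_sum, ← mul_sum]
  have := sum_inv_le_log N
  have := sum_inv_sq_le N
  nlinarith

/-- Two-step convolution bound. -/
lemma two_step_bound (x b : Vtx N) :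
    ∑ y : Vtx N, edgeProb N ccr x y * edgeProb N ccr y b
      ≤ (ccr / N)^2 * (4 * Real.log N + 12) := by
  classical
  have hsq : ∀ z : Vtx N, ∀ u v : Vtx N,
      (edgeProb N ccr u v)^2 ≤ (ccr/N)^2 * (((torusDist N u v : ℝ))⁻¹)^2 := by
    intro z u v
    have h := edgeProb_le_inv (N := N) u v
    have h0 := edgeProb_nonneg (N := N) (le_of_lt ccr_pos) u v
    calc (edgeProb N ccr u v)^2 ≤ ((ccr / N) * ((torusDist N u v : ℝ))⁻¹)^2 := by nlinarith
      _ = (ccr/N)^2 * (((torusDist N u v : ℝ))⁻¹)^2 := by ring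
  have hS : ∀ u : Vtx N, ∑ y : Vtx N, (edgeProb N ccr u y)^2
      ≤ (ccr/N)^2 * (4 * Real.log N + 12) := by
    intro u
    have e1 : ∑ y : Vtx N, (edgeProb N ccr u y)^2
        = ∑ y ∈ (univ : Finset (Vtx N)).erase u, (edgeProb N ccr u y)^2 := by
      rw [Finset.sum_erase]
      simp [edgeProb]
    rw [e1]
    calc ∑ y ∈ (univ : Finset (Vtx N)).erase u, (edgeProb N ccr u y)^2
        ≤ ∑ y ∈ (univ : Finset (Vtx N)).erase u, (ccr/N)^2 * (((torusDist N u y : ℝ))⁻¹)^2 :=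
          sum_le_sum fun y _ => hsq u u y
      _ = (ccr/N)^2 * ∑ y ∈ (univ : Finset (Vtx N)).erase u, (((torusDist N u y : ℝ))⁻¹)^2 := by
          rw [mul_sum]
      _ = (ccr/N)^2 * ∑ w ∈ (univ : Finset (Vtx N)).erase 0, (((torusDist N w 0 : ℝ))⁻¹)^2 := by
          rw [sum_erase_translate u (fun d => (((d:ℕ):ℝ))⁻¹^2)]
      _ ≤ (ccr/N)^2 * (4 * Real.log N + 12) := by
          have := sum_inv_sq_dist_le (N := N)
          have h0 : (0:ℝ) ≤ (ccr/N)^2 := sq_nonneg _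
          nlinarith
  have hS' : ∑ y : Vtx N, (edgeProb N ccr y b)^2
      ≤ (ccr/N)^2 * (4 * Real.log N + 12) := by
    have : ∀ y : Vtx N, edgeProb N ccr y b = edgeProb N ccr b y := by
      intro y
      unfold edgeProb
      rw [torusDist_comm]
      simp [eq_comm]
    rw [Finset.sum_congr rfl (fun y _ => by rw [this y])]
    exact hS b
  have hAM : ∀ y : Vtx N, edgeProb N ccr x y * edgeProb N ccr y b
      ≤ ((edgeProb N ccr x y)^2 + (edgeProb N ccr y b)^2)/2 := by
    intro y
    nlinarith [sq_nonneg (edgeProb N ccr x y - edgeProb N ccr y b)]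
  calc ∑ y : Vtx N, edgeProb N ccr x y * edgeProb N ccr y b
      ≤ ∑ y : Vtx N, ((edgeProb N ccr x y)^2 + (edgeProb N ccr y b)^2)/2 :=
        sum_le_sum fun y _ => hAM y
    _ = ((∑ y : Vtx N, (edgeProb N ccr x y)^2) + ∑ y : Vtx N, (edgeProb N ccr y b)^2)/2 := by
        rw [← sum_add_distrib, ← sum_div]
    _ ≤ (ccr/N)^2 * (4 * Real.log N + 12) := by
        have := hS x
        linarith

end Translate

section Analytic
open Filter Real

noncomputable def Gf (x : ℝ) : ℝ := x * Real.log x - x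

noncomputable def DS (M : ℕ) : ℝ :=
  ∑ i ∈ range M, ∑ j ∈ range M, ((i:ℝ) + (j:ℝ) + 2)⁻¹

lemma log_succ_sub_log_le {u : ℝ} (hu : 1 ≤ u) : Real.log (u+1) - Real.log u ≤ u⁻¹ := by
  have h1 : (0:ℝ) < u := by linarith
  have hx : (0:ℝ) < (u+1)/u := by positivity
  have := Real.log_le_sub_one_of_pos hx
  rw [Real.log_div (by positivity) (by positivity)] at this
  have : Real.log (u+1) - Real.log u ≤ (u+1)/u - 1 := this
  have heq : (u+1)/u - 1 = u⁻¹ := by field_simp; ring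
  linarith [heq ▸ this]

lemma Gf_sub_le {u : ℝ} (hu : 2 ≤ u) : Gf u - Gf (u-1) ≤ Real.log u := by
  have h1 : (0:ℝ) < u - 1 := by linarith
  have h0 : (0:ℝ) < u := by linarith
  have hx : (0:ℝ) < u/(u-1) := by positivity
  have hlog := Real.log_le_sub_one_of_pos hx
  rw [Real.log_div (by positivity) (by positivity)] at hlog
  -- (u-1)(log u - log (u-1)) ≤ 1
  have key : (u-1) * (Real.log u - Real.log (u-1)) ≤ 1 := by
    have h2 : u/(u-1) - 1 = (u-1)⁻¹ := by field_simp; ring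
    have h3 : Real.log u - Real.log (u-1) ≤ (u-1)⁻¹ := by linarith [h2 ▸ hlog]
    calc (u-1) * (Real.log u - Real.log (u-1)) ≤ (u-1) * (u-1)⁻¹ := by
          apply mul_le_mul_of_nonneg_left h3 (by linarith)
      _ = 1 := by field_simp
  unfold Gf
  nlinarith [key]

lemma log_le_Gf_sub {u : ℝ} (hu : 1 ≤ u) : Real.log u ≤ Gf (u+1) - Gf u := by
  have h0 : (0:ℝ) < u := by linarith
  have hx : (0:ℝ) < u/(u+1) := by positivity
  have hlog := Real.log_le_sub_one_of_pos hx
  rw [Real.log_div (by positivity) (by positivity)] at hlog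
  have h2 : u/(u+1) - 1 = -(u+1)⁻¹ := by field_simp; ring
  have h3 : (u+1)⁻¹ ≤ Real.log (u+1) - Real.log u := by linarith [h2 ▸ hlog]
  have key : 1 ≤ (u+1) * (Real.log (u+1) - Real.log u) := by
    calc (1:ℝ) = (u+1) * (u+1)⁻¹ := by field_simp
      _ ≤ (u+1) * (Real.log (u+1) - Real.log u) := by
          apply mul_le_mul_of_nonneg_left h3 (by linarith)
  unfold Gf
  nlinarith [key]

lemma DS_ge (M : ℕ) :
    Gf (2*(M:ℝ)+1) - Gf ((M:ℝ)+1) - Gf ((M:ℝ)+2) + Gf 2 ≤ DS M := by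
  have inner : ∀ i ∈ range M,
      Real.log ((M:ℝ)+(i:ℝ)+2) - Real.log ((i:ℝ)+2) ≤ ∑ j ∈ range M, ((i:ℝ) + (j:ℝ) + 2)⁻¹ := by
    intro i _
    have tel : ∑ j ∈ range M,
        (Real.log ((i:ℝ)+((j:ℝ)+1)+2) - Real.log ((i:ℝ)+(j:ℝ)+2))
        = Real.log ((i:ℝ)+(M:ℝ)+2) - Real.log ((i:ℝ)+(0:ℝ)+2) := by
      have := Finset.sum_range_sub (fun j => Real.log ((i:ℝ)+(j:ℝ)+2)) M
      simpa [Nat.cast_add, Nat.cast_one, Nat.cast_zero] using this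
    have hterm : ∀ j ∈ range M,
        Real.log ((i:ℝ)+((j:ℝ)+1)+2) - Real.log ((i:ℝ)+(j:ℝ)+2) ≤ ((i:ℝ) + (j:ℝ) + 2)⁻¹ := by
      intro j _
      have h := log_succ_sub_log_le (u := (i:ℝ)+(j:ℝ)+2)
        (by have := Nat.cast_nonneg (α := ℝ) i; have := Nat.cast_nonneg (α := ℝ) j; linarith)
      have : (i:ℝ)+(j:ℝ)+2+1 = (i:ℝ)+((j:ℝ)+1)+2 := by ring
      rw [this] at h
      exact h
    have := Finset.sum_le_sum hterm
    rw [tel] at this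
    have e : (i:ℝ)+(M:ℝ)+2 = (M:ℝ)+(i:ℝ)+2 := by ring
    have e0 : (i:ℝ)+(0:ℝ)+2 = (i:ℝ)+2 := by ring
    rw [e, e0] at this
    exact this
  have step1 : ∑ i ∈ range M, (Real.log ((M:ℝ)+(i:ℝ)+2) - Real.log ((i:ℝ)+2)) ≤ DS M := by
    unfold DS
    exact Finset.sum_le_sum inner
  have step2 : Gf (2*(M:ℝ)+1) - Gf ((M:ℝ)+1)
      ≤ ∑ i ∈ range M, Real.log ((M:ℝ)+(i:ℝ)+2) := by
    have tel : ∑ i ∈ range M, (Gf ((M:ℝ)+((i:ℝ)+1)+1) - Gf ((M:ℝ)+(i:ℝ)+1))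
        = Gf ((M:ℝ)+(M:ℝ)+1) - Gf ((M:ℝ)+(0:ℝ)+1) := by
      have := Finset.sum_range_sub (fun i => Gf ((M:ℝ)+(i:ℝ)+1)) M
      simpa [Nat.cast_add, Nat.cast_one, Nat.cast_zero] using this
    have hterm : ∀ i ∈ range M,
        Gf ((M:ℝ)+((i:ℝ)+1)+1) - Gf ((M:ℝ)+(i:ℝ)+1) ≤ Real.log ((M:ℝ)+(i:ℝ)+2) := by
      intro i _
      have h := Gf_sub_le (u := (M:ℝ)+(i:ℝ)+2)
        (by have := Nat.cast_nonneg (α := ℝ) M; have := Nat.cast_nonneg (α := ℝ) i; linarith)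
      have e1 : (M:ℝ)+(i:ℝ)+2 - 1 = (M:ℝ)+(i:ℝ)+1 := by ring
      have e2 : (M:ℝ)+((i:ℝ)+1)+1 = (M:ℝ)+(i:ℝ)+2 := by ring
      rw [e1] at h
      rw [e2]
      exact h
    have hs := Finset.sum_le_sum hterm
    rw [tel] at hs
    have e : (M:ℝ)+(M:ℝ)+1 = 2*(M:ℝ)+1 := by ring
    have e0 : (M:ℝ)+(0:ℝ)+1 = (M:ℝ)+1 := by ring
    rw [e, e0] at hs
    exact hs
  have step3 : ∑ i ∈ range M, Real.log ((i:ℝ)+2) ≤ Gf ((M:ℝ)+2) - Gf 2 := by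
    have tel : ∑ i ∈ range M, (Gf (((i:ℝ)+1)+2) - Gf ((i:ℝ)+2))
        = Gf ((M:ℝ)+2) - Gf ((0:ℝ)+2) := by
      have := Finset.sum_range_sub (fun i => Gf ((i:ℝ)+2)) M
      simpa [Nat.cast_add, Nat.cast_one, Nat.cast_zero] using this
    have hterm : ∀ i ∈ range M,
        Real.log ((i:ℝ)+2) ≤ Gf (((i:ℝ)+1)+2) - Gf ((i:ℝ)+2) := by
      intro i _
      have h := log_le_Gf_sub (u := (i:ℝ)+2)
        (by have := Nat.cast_nonneg (α := ℝ) i; linarith)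
      have e : (i:ℝ)+2+1 = ((i:ℝ)+1)+2 := by ring
      rw [e] at h
      exact h
    have hs := Finset.sum_le_sum hterm
    rw [tel] at hs
    have e0 : ((0:ℝ)+2) = (2:ℝ) := by norm_num
    rw [e0] at hs
    exact hs
  have hsub : ∑ i ∈ range M, (Real.log ((M:ℝ)+(i:ℝ)+2) - Real.log ((i:ℝ)+2))
      = (∑ i ∈ range M, Real.log ((M:ℝ)+(i:ℝ)+2)) - ∑ i ∈ range M, Real.log ((i:ℝ)+2) := by
    rw [Finset.sum_sub_distrib]
  linarith [step1, hsub ▸ step1]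

lemma tendsto_L_div :
    Filter.Tendsto (fun x : ℝ => (Gf (2*x+1) - Gf (x+1) - Gf (x+2) + Gf 2)/x)
      Filter.atTop (nhds (2 * Real.log 2)) := by
  have h1 : Filter.Tendsto (fun x : ℝ => Real.log ((2*x+1)/(x+1)))
      Filter.atTop (nhds (Real.log 2)) := by
    apply Filter.Tendsto.comp (Real.continuousAt_log (by norm_num)).tendsto
    have : Filter.Tendsto (fun x : ℝ => 2 - (x+1)⁻¹) Filter.atTop (nhds 2) := by
      have := tendsto_inv_atTop_zero.comp (tendsto_atTop_add_const_right Filter.atTop (1:ℝ) Filter.tendsto_id)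
      have h := (tendsto_const_nhds (x := (2:ℝ)) (f := Filter.atTop)).sub this
      simpa using h
    refine this.congr' ?_
    filter_upwards [Filter.eventually_ge_atTop (1:ℝ)] with x hx
    have : x + 1 ≠ 0 := by linarith
    field_simp <;> ring_nf
  have h2 : Filter.Tendsto (fun x : ℝ => Real.log ((2*x+1)/(x+2)))
      Filter.atTop (nhds (Real.log 2)) := by
    apply Filter.Tendsto.comp (Real.continuousAt_log (by norm_num)).tendsto
    have : Filter.Tendsto (fun x : ℝ => 2 - 3*(x+2)⁻¹) Filter.atTop (nhds 2) := by
      have := tendsto_inv_atTop_zero.comp (tendsto_atTop_add_const_right Filter.atTop (2:ℝ) Filter.tendsto_id)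
      have h := (tendsto_const_nhds (x := (2:ℝ)) (f := Filter.atTop)).sub ((this.const_mul (3:ℝ)))
      simpa using h
    refine this.congr' ?_
    filter_upwards [Filter.eventually_ge_atTop (1:ℝ)] with x hx
    have : x + 2 ≠ 0 := by linarith
    field_simp <;> ring_nf
  have hlogdiv : Filter.Tendsto (fun y : ℝ => Real.log y / y) Filter.atTop (nhds 0) :=
    Real.isLittleO_log_id_atTop.tendsto_div_nhds_zero
  have haux : ∀ c d : ℝ, 0 < c → Filter.Tendsto (fun x : ℝ => Real.log (c*x+d) / x)
      Filter.atTop (nhds 0) := by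
    intro c d hc
    have hcd : Filter.Tendsto (fun x : ℝ => c*x+d) Filter.atTop Filter.atTop := by
      apply Filter.tendsto_atTop_add_const_right
      exact (Filter.tendsto_id.const_mul_atTop hc)
    have t1 : Filter.Tendsto (fun x : ℝ => Real.log (c*x+d)/(c*x+d)) Filter.atTop (nhds 0) :=
      hlogdiv.comp hcd
    have t2 : Filter.Tendsto (fun x : ℝ => (c*x+d)/x) Filter.atTop (nhds c) := by
      have : Filter.Tendsto (fun x : ℝ => c + d*x⁻¹) Filter.atTop (nhds c) := by
        have h := (tendsto_const_nhds (x := c) (f := Filter.atTop)).add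
          ((tendsto_inv_atTop_zero).const_mul d)
        simpa using h
      refine this.congr' ?_
      filter_upwards [Filter.eventually_gt_atTop (0:ℝ)] with x hx
      field_simp <;> ring_nf
    have := t1.mul t2
    rw [zero_mul] at this
    refine this.congr' ?_
    filter_upwards [Filter.eventually_gt_atTop (max 0 ((1-d)/c))] with x hx
    have hx0 : 0 < x := lt_of_le_of_lt (le_max_left _ _) hx
    have hx1 : (1:ℝ) ≤ c*x+d := by
      have h2 := lt_of_le_of_lt (le_max_right _ _) hx
      have := (div_lt_iff₀ hc).1 h2
      linarith
    have hne : c*x+d ≠ 0 := by linarith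
    field_simp <;> ring_nf
  have h3 : Filter.Tendsto (fun x : ℝ =>
      (Real.log (2*x+1) - Real.log (x+1) - 2*Real.log (x+2) + 2*Real.log 2)/x)
      Filter.atTop (nhds 0) := by
    have t1 := haux 2 1 (by norm_num)
    have t2' : Filter.Tendsto (fun x : ℝ => Real.log (x+1) / x) Filter.atTop (nhds 0) := by
      have := haux 1 1 (by norm_num)
      refine this.congr (fun x => ?_)
      norm_num
    have t3' : Filter.Tendsto (fun x : ℝ => Real.log (x+2) / x) Filter.atTop (nhds 0) := by
      have := haux 1 2 (by norm_num)
      refine this.congr (fun x => ?_)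
      norm_num
    have t4 : Filter.Tendsto (fun x : ℝ => (2*Real.log 2)*x⁻¹) Filter.atTop (nhds 0) := by
      simpa using (tendsto_inv_atTop_zero (𝕜 := ℝ)).const_mul (2*Real.log 2)
    have hh : Filter.Tendsto (fun x : ℝ =>
        Real.log (2*x+1)/x - Real.log (x+1)/x - 2*(Real.log (x+2)/x) + (2*Real.log 2)*x⁻¹)
        Filter.atTop (nhds 0) := by
      have := ((t1.sub t2').sub (t3'.const_mul (2:ℝ))).add t4
      simpa using this
    refine hh.congr' ?_
    filter_upwards [Filter.eventually_gt_atTop (0:ℝ)] with x hx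
    have hx0 : x ≠ 0 := by linarith
    field_simp <;> ring_nf
  have hsum := (h1.add h2).add h3
  rw [add_zero] at hsum
  have : Real.log 2 + Real.log 2 = 2 * Real.log 2 := by ring
  rw [this] at hsum
  refine hsum.congr' ?_
  filter_upwards [Filter.eventually_ge_atTop (1:ℝ)] with x hx
  have h2x : (0:ℝ) < 2*x+1 := by linarith
  have hx1 : (0:ℝ) < x+1 := by linarith
  have hx2 : (0:ℝ) < x+2 := by linarith
  have hx0 : x ≠ 0 := by linarith
  rw [Real.log_div (by linarith) (by linarith), Real.log_div (by linarith) (by linarith)]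
  unfold Gf
  have hGf2 : (2:ℝ) * Real.log 2 - 2 = 2 * Real.log 2 - 2 := rfl
  field_simp
  ring

lemma DS_lower {η : ℝ} (hη : 0 < η) :
    ∀ᶠ M : ℕ in Filter.atTop, (2 * Real.log 2 - η) * M ≤ DS M := by
  have h := tendsto_L_div.comp (tendsto_natCast_atTop_atTop (R := ℝ))
  have h2 : ∀ᶠ M : ℕ in Filter.atTop,
      2 * Real.log 2 - η ≤ (Gf (2*(M:ℝ)+1) - Gf ((M:ℝ)+1) - Gf ((M:ℝ)+2) + Gf 2)/(M:ℝ) :=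
    h.eventually (eventually_ge_nhds (by linarith : 2*Real.log 2 - η < 2*Real.log 2))
  filter_upwards [h2, Filter.eventually_ge_atTop 1] with M hM hM1
  have hM0 : (0:ℝ) < (M:ℝ) := by exact_mod_cast hM1
  have := (le_div_iff₀ hM0).1 hM
  have := DS_ge M
  linarith

end Analytic

section LowerSum
variable {N : ℕ} [NeZero N]

lemma sum_inv_dist_ge :
    4 * DS ((N-1)/2) ≤ ∑ w ∈ (univ : Finset (Vtx N)).erase 0, ((torusDist N w 0 : ℝ))⁻¹ := by
  classical
  set M := (N-1)/2 with hM
  have hNpos : 1 ≤ N := Nat.one_le_iff_ne_zero.2 (NeZero.ne N)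
  have h2M : 2 * M ≤ N - 1 := by omega
  let fp : ℕ → ZMod N := fun s => (s : ZMod N)
  let fm : ℕ → ZMod N := fun s => -(s : ZMod N)
  have hslt : ∀ s ∈ Icc 1 M, s < N := by intro s hs; rw [mem_Icc] at hs; omega
  have hval : ∀ s ∈ Icc 1 M, (fp s).val = s := fun s hs => ZMod.val_cast_of_lt (hslt s hs)
  have hrho : ∀ s ∈ Icc 1 M, rhoN N (fp s) = s := by
    intro s hs
    have hvs := hval s hs
    rw [mem_Icc] at hs
    unfold rhoN
    rw [hvs, if_pos (by omega)]
  have hrhoneg : ∀ s ∈ Icc 1 M, rhoN N (fm s) = s := by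
    intro s hs
    show rhoN N (-(s:ZMod N)) = s
    rw [rhoN_neg]
    exact hrho s hs
  set TT : Finset (ZMod N) := (Icc 1 M).image fp ∪ (Icc 1 M).image fm with hTT
  have hinj1 : ∀ s ∈ Icc 1 M, ∀ t ∈ Icc 1 M, fp s = fp t → s = t := by
    intro s hs t ht h
    have h1 := hval s hs
    have h2 := hval t ht
    rw [← h1, ← h2, h]
  have hinj2 : ∀ s ∈ Icc 1 M, ∀ t ∈ Icc 1 M, fm s = fm t → s = t := by
    intro s hs t ht h
    have h' : fp s = fp t := neg_injective h
    exact hinj1 s hs t ht h'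
  have hdisj : Disjoint ((Icc 1 M).image fp) ((Icc 1 M).image fm) := by
    rw [Finset.disjoint_left]
    rintro a ha hb
    rw [Finset.mem_image] at ha hb
    obtain ⟨s, hs, hseq⟩ := ha
    obtain ⟨t, ht, hteq⟩ := hb
    have hs' := hs; have ht' := ht
    rw [mem_Icc] at hs' ht'
    have htne : (t : ZMod N) ≠ 0 := by
      intro h0
      have := hval t ht
      rw [show fp t = (t : ZMod N) from rfl, h0, ZMod.val_zero] at this
      omega
    have hvneg : (fm t).val = N - t := by
      show ((-(t:ZMod N))).val = N - t
      rw [ZMod.neg_val, if_neg htne]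
      rw [hval t ht]
    have heq : s = N - t := by
      rw [← hval s hs, hseq, ← hteq, hvneg]
    omega
  have key : ∀ g : ℕ → ℝ, ∑ i ∈ TT, g (rhoN N i) = 2 * ∑ s ∈ Icc 1 M, g s := by
    intro g
    rw [hTT, Finset.sum_union hdisj, Finset.sum_image hinj1, Finset.sum_image hinj2]
    have e1 : ∑ s ∈ Icc 1 M, g (rhoN N (fp s)) = ∑ s ∈ Icc 1 M, g s :=
      Finset.sum_congr rfl (fun s hs => by rw [hrho s hs])
    have e2 : ∑ s ∈ Icc 1 M, g (rhoN N (fm s)) = ∑ s ∈ Icc 1 M, g s :=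
      Finset.sum_congr rfl (fun s hs => by rw [hrhoneg s hs])
    rw [e1, e2]
    ring
  have hTTne : ∀ i ∈ TT, i ≠ 0 := by
    intro i hi
    rw [hTT, Finset.mem_union] at hi
    have hrhoi : 1 ≤ rhoN N i := by
      rcases hi with hi | hi <;> rw [Finset.mem_image] at hi <;> obtain ⟨s, hs, rfl⟩ := hi
      · rw [hrho s hs]; rw [mem_Icc] at hs; omega
      · rw [hrhoneg s hs]; rw [mem_Icc] at hs; omega
    intro h0
    rw [h0, (rhoN_eq_zero_iff (0 : ZMod N)).2 rfl] at hrhoi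
    omega
  have hsub : TT ×ˢ TT ⊆ (univ : Finset (Vtx N)).erase 0 := by
    intro w hw
    rw [Finset.mem_product] at hw
    rw [mem_erase]
    refine ⟨?_, mem_univ _⟩
    intro h0
    exact hTTne w.1 hw.1 (by rw [h0]; rfl)
  have hstep : ∑ w ∈ TT ×ˢ TT, ((torusDist N w 0 : ℝ))⁻¹
      ≤ ∑ w ∈ (univ : Finset (Vtx N)).erase 0, ((torusDist N w 0 : ℝ))⁻¹ :=
    Finset.sum_le_sum_of_subset_of_nonneg hsub (fun w _ _ => by positivity)
  refine le_trans ?_ hstep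
  have hprod : ∑ w ∈ TT ×ˢ TT, ((torusDist N w 0 : ℝ))⁻¹
      = ∑ i ∈ TT, ∑ j ∈ TT, (((rhoN N i + rhoN N j : ℕ) : ℝ))⁻¹ := by
    rw [Finset.sum_product]
    refine Finset.sum_congr rfl fun i _ => Finset.sum_congr rfl fun j _ => ?_
    rw [dd_eq]
  rw [hprod]
  have e1 : ∀ i ∈ TT, ∑ j ∈ TT, (((rhoN N i + rhoN N j : ℕ) : ℝ))⁻¹
      = 2 * ∑ t ∈ Icc 1 M, (((rhoN N i + t : ℕ) : ℝ))⁻¹ := by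
    intro i _
    exact key (fun t => (((rhoN N i + t : ℕ) : ℝ))⁻¹)
  rw [Finset.sum_congr rfl e1, key (fun s => 2 * ∑ t ∈ Icc 1 M, (((s + t : ℕ) : ℝ))⁻¹)]
  have hDS : ∑ s ∈ Icc 1 M, ∑ t ∈ Icc 1 M, (((s + t : ℕ) : ℝ))⁻¹ = DS M := by
    unfold DS
    rw [← Finset.Ico_add_one_right_eq_Icc, Finset.sum_Ico_eq_sum_range]
    refine Finset.sum_congr (by norm_num) fun i _ => ?_
    rw [Finset.sum_Ico_eq_sum_range]
    refine Finset.sum_congr (by norm_num) fun j _ => ?_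
    push_cast
    ring_nf
  rw [← hDS]
  rw [Finset.mul_sum]
  apply le_of_eq
  rw [Finset.mul_sum]
  refine Finset.sum_congr rfl fun s _ => by ring

end LowerSum

section Ball
variable {N : ℕ} [NeZero N]

lemma card_ball_le (R : ℕ) :
    ((univ : Finset (Vtx N)).filter (fun w => torusDist N w 0 ≤ R)).card ≤ 4*(R+1)^2 := by
  classical
  have hsub : (univ : Finset (Vtx N)).filter (fun w => torusDist N w 0 ≤ R) ⊆
      (range (R+1)).biUnion (fun r => univ.filter (fun w : Vtx N => torusDist N w 0 = r)) := by
    intro w hw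
    rw [mem_filter] at hw
    rw [mem_biUnion]
    exact ⟨torusDist N w 0, by rw [mem_range]; omega, by rw [mem_filter]; exact ⟨mem_univ _, rfl⟩⟩
  refine (card_le_card hsub).trans (card_biUnion_le.trans ?_)
  calc ∑ r ∈ range (R+1), (univ.filter (fun w : Vtx N => torusDist N w 0 = r)).card
      ≤ ∑ r ∈ range (R+1), 4*(r+1) := sum_le_sum fun r _ => card_dist_fiber r
    _ ≤ ∑ _r ∈ range (R+1), 4*(R+1) := sum_le_sum fun r hr => by
        rw [mem_range] at hr; omega
    _ = 4*(R+1)^2 := by rw [sum_const, card_range]; ring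

lemma card_ball_x_le (x : Vtx N) (R : ℕ) :
    ((univ : Finset (Vtx N)).filter (fun v => torusDist N x v ≤ R)).card ≤ 4*(R+1)^2 := by
  classical
  refine le_trans (Finset.card_le_card_of_injOn (fun v => x - v) ?_ ?_) (card_ball_le R)
  · intro v hv
    rw [mem_coe, mem_filter] at hv ⊢
    exact ⟨mem_univ _, by rw [← torusDist_eq_sub]; exact hv.2⟩
  · intro v _ v' _ h
    exact sub_right_injective h

lemma sum_edgeProb_subset_le (S' : Finset (Vtx N)) (x : Vtx N) (R : ℕ) :
    ∑ v ∈ S', edgeProb N ccr x v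
      ≤ (ccr/N) * (4*((R:ℝ)+1)^2) + (ccr/N) * (S'.card : ℝ) / ((R:ℝ)+1) := by
  classical
  have hcN : (0:ℝ) < (N:ℝ) := by exact_mod_cast Nat.pos_of_ne_zero (NeZero.ne N)
  have hc : (0:ℝ) ≤ ccr/N := div_nonneg ccr_pos.le hcN.le
  rw [← Finset.sum_filter_add_sum_filter_not S' (fun v => torusDist N x v ≤ R)]
  have hnear : ∑ v ∈ S'.filter (fun v => torusDist N x v ≤ R), edgeProb N ccr x v
      ≤ (ccr/N) * (4*((R:ℝ)+1)^2) := by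
    calc ∑ v ∈ S'.filter (fun v => torusDist N x v ≤ R), edgeProb N ccr x v
        ≤ ∑ _v ∈ S'.filter (fun v => torusDist N x v ≤ R), ccr/N :=
          sum_le_sum fun v _ => edgeProb_le_const x v
      _ = ((S'.filter (fun v => torusDist N x v ≤ R)).card : ℝ) * (ccr/N) := by
          rw [sum_const, nsmul_eq_mul]
      _ ≤ (4*((R:ℝ)+1)^2) * (ccr/N) := by
          have h1 : (S'.filter (fun v => torusDist N x v ≤ R)).card ≤ 4*(R+1)^2 := by
            refine le_trans (card_le_card ?_) (card_ball_x_le x R)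
            intro v hv
            rw [mem_filter] at hv ⊢
            exact ⟨mem_univ _, hv.2⟩
          have h2 : ((S'.filter (fun v => torusDist N x v ≤ R)).card : ℝ) ≤ 4*((R:ℝ)+1)^2 := by
            exact_mod_cast h1
          nlinarith
      _ = (ccr/N) * (4*((R:ℝ)+1)^2) := by ring
  have hfar : ∑ v ∈ S'.filter (fun v => ¬ torusDist N x v ≤ R), edgeProb N ccr x v
      ≤ (ccr/N) * (S'.card : ℝ) / ((R:ℝ)+1) := by
    calc ∑ v ∈ S'.filter (fun v => ¬ torusDist N x v ≤ R), edgeProb N ccr x v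
        ≤ ∑ _v ∈ S'.filter (fun v => ¬ torusDist N x v ≤ R), (ccr/N) * (((R:ℝ)+1))⁻¹ := by
          refine sum_le_sum fun v hv => ?_
          rw [mem_filter] at hv
          have hd : R + 1 ≤ torusDist N x v := by omega
          have hd' : ((R:ℝ)+1) ≤ (torusDist N x v : ℝ) := by exact_mod_cast hd
          refine (edgeProb_le_inv x v).trans ?_
          have : ((torusDist N x v : ℝ))⁻¹ ≤ (((R:ℝ)+1))⁻¹ := by
            exact inv_anti₀ (by positivity : (0:ℝ) < (R:ℝ)+1) hd'
          have h9 : (0:ℝ) ≤ ((torusDist N x v : ℝ))⁻¹ := by positivity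
          nlinarith
      _ = ((S'.filter (fun v => ¬ torusDist N x v ≤ R)).card : ℝ) * ((ccr/N) * (((R:ℝ)+1))⁻¹) := by
          rw [sum_const, nsmul_eq_mul]
      _ ≤ ((S'.card : ℝ)) * ((ccr/N) * (((R:ℝ)+1))⁻¹) := by
          have h1 : ((S'.filter (fun v => ¬ torusDist N x v ≤ R)).card : ℝ) ≤ (S'.card : ℝ) := by
            exact_mod_cast card_le_card (filter_subset _ _)
          have h2 : (0:ℝ) ≤ (ccr/N) * (((R:ℝ)+1))⁻¹ := by positivity
          nlinarith [Nat.cast_nonneg (α := ℝ) S'.card]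
      _ = (ccr/N) * (S'.card : ℝ) / ((R:ℝ)+1) := by
          rw [div_eq_mul_inv]
          ring
  linarith

end Ball

section ZBound
open Filter

lemma rpow_nat_tendsto_zero {a : ℝ} (ha : 0 < a) :
    Tendsto (fun N : ℕ => ((N:ℝ)) ^ (-a)) atTop (nhds 0) :=
  (tendsto_rpow_neg_atTop ha).comp (tendsto_natCast_atTop_atTop (R := ℝ))

/-- The deletion error tends to zero. -/
lemma deletion_tendsto (C : ℝ) :
    Tendsto (fun N : ℕ =>
      16 * ((N:ℝ)) ^ (-(1:ℝ)/5) + C * ((N:ℝ)) ^ (-(1:ℝ)/15) + ((N:ℝ)) ^ (-(7:ℝ)/5))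
      atTop (nhds 0) := by
  have h1 := (rpow_nat_tendsto_zero (a := 1/5) (by norm_num)).const_mul (16:ℝ)
  have h2 := (rpow_nat_tendsto_zero (a := 1/15) (by norm_num)).const_mul C
  have h3 := rpow_nat_tendsto_zero (a := 7/5) (by norm_num)
  have := (h1.add h2).add h3
  simp only [mul_zero, add_zero] at this
  refine this.congr (fun N => ?_)
  norm_num

set_option maxHeartbeats 1600000 in
/-- Eventually, `Z_{N,S}(x) ≥ 1 - δ` for all admissible `S`. -/
lemma Z_lower (C : ℝ) (hC : 0 ≤ C) {δ : ℝ} (hδ : 0 < δ) (hδ1 : δ ≤ 1) :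
    ∀ᶠ N : ℕ in atTop, ∀ (inst : NeZero N), ∀ (S : Finset (Vtx N)) (x : Vtx N),
      (S.card : ℝ) ≤ C * (N:ℝ) ^ ((4:ℝ)/3) + 1 → 1 - δ ≤ @ZNA N inst ccr S x := by
  classical
  set η := δ/8 with hη
  have hη0 : 0 < η := by rw [hη]; linarith
  -- eventual facts
  have tendM : Tendsto (fun N : ℕ => (N-1)/2) atTop atTop :=
    Filter.tendsto_atTop_atTop.2 fun b => ⟨2*b+1, fun n hn => by omega⟩
  have eDS : ∀ᶠ N : ℕ in atTop,
      (2 * Real.log 2 - η) * (((N-1)/2 : ℕ) : ℝ) ≤ DS ((N-1)/2) :=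
    tendM.eventually (DS_lower hη0)
  have eDel : ∀ᶠ N : ℕ in atTop,
      16 * ((N:ℝ)) ^ (-(1:ℝ)/5) + (C+1) * ((N:ℝ)) ^ (-(1:ℝ)/15) + ((N:ℝ)) ^ (-(7:ℝ)/5) ≤ δ/2 :=
    (deletion_tendsto (C+1)).eventually (eventually_le_nhds (by linarith))
  filter_upwards [eDS, eDel, Filter.eventually_ge_atTop 2,
    (tendsto_natCast_atTop_atTop (R := ℝ)).eventually (Filter.eventually_ge_atTop (16/δ))]
    with N hDS hDel hN2 hNδ
  intro inst S x hScard
  have hNpos : (0:ℝ) < (N:ℝ) := by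
    have : 0 < N := by omega
    exact_mod_cast this
  have hN1 : (1:ℝ) ≤ (N:ℝ) := by
    have : 1 ≤ N := by omega
    exact_mod_cast this
  have hccr := ccr_pos
  have hccr1 := ccr_lt_one
  classical
  set A : Finset (Vtx N) := (univ : Finset (Vtx N)).erase x with hA
  have hAS : ((univ : Finset (Vtx N)) \ S).erase x = A \ S := by
    ext v
    simp only [mem_erase, Finset.mem_sdiff, mem_univ, true_and, hA]
    tauto
  have hZeq : ZNA N ccr S x = ∑ v ∈ A \ S, edgeProb N ccr x v := by
    unfold ZNA
    rw [hAS]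
  have hsplit : ∑ v ∈ A ∩ S, edgeProb N ccr x v + ∑ v ∈ A \ S, edgeProb N ccr x v
      = ∑ v ∈ A, edgeProb N ccr x v := Finset.sum_inter_add_sum_sdiff A S _
  -- full sum lower bound
  set Mr : ℝ := (((N-1)/2 : ℕ) : ℝ) with hMrdef
  have hfull : (ccr/(N:ℝ)) * (4 * DS ((N-1)/2)) ≤ ∑ v ∈ A, edgeProb N ccr x v := by
    have e1 : ∑ v ∈ A, edgeProb N ccr x v
        = (ccr/(N:ℝ)) * ∑ v ∈ A, ((torusDist N x v : ℝ))⁻¹ := by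
      rw [Finset.mul_sum]
      refine Finset.sum_congr rfl fun v hv => ?_
      rw [hA, mem_erase] at hv
      exact edgeProb_eq (fun h => hv.1 h.symm)
    have e2 : ∑ v ∈ A, ((torusDist N x v : ℝ))⁻¹
        = ∑ w ∈ (univ : Finset (Vtx N)).erase 0, ((torusDist N w 0 : ℝ))⁻¹ :=
      sum_erase_translate x (fun d => ((d : ℝ))⁻¹)
    rw [e1, e2]
    have := sum_inv_dist_ge (N := N)
    have hcN : (0:ℝ) ≤ ccr/(N:ℝ) := div_nonneg hccr.le hNpos.le
    nlinarith
  have hMr2 : (N:ℝ) - 2 ≤ 2 * Mr := by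
    have hc : N - 2 ≤ 2*((N-1)/2) := by omega
    have := (Nat.cast_le (α := ℝ)).2 hc
    rw [Nat.cast_sub hN2] at this
    push_cast at this
    linarith
  have hMr0 : (0:ℝ) ≤ Mr := Nat.cast_nonneg _
  have hδN : 2/(N:ℝ) ≤ δ/8 := by
    rw [div_le_div_iff₀ hNpos (by norm_num)]
    have h16 : 16 ≤ (N:ℝ)*δ := by
      have := (div_le_iff₀ hδ).1 hNδ
      linarith
    linarith
  have hfull2 : 1 - δ/2 ≤ (ccr/(N:ℝ)) * (4 * DS ((N-1)/2)) := by
    have hDS' : (2 * Real.log 2 - η) * Mr ≤ DS ((N-1)/2) := hDS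
    have hkey : ccr * 4 * (2*Real.log 2 - η) = 2 - 4*ccr*η := by
      have h := ccr_mul
      nlinarith [h]
    have hη1 : η ≤ 1/8 := by rw [hη]; linarith
    have hlog2 : 0.6931471803 < Real.log 2 := Real.log_two_gt_d9
    have hpos2 : (0:ℝ) < 2*Real.log 2 - η := by linarith
    have hstep : (2 - 4*ccr*η) * Mr / (N:ℝ) ≤ (ccr/(N:ℝ)) * (4 * DS ((N-1)/2)) := by
      have h2 : (2 - 4*ccr*η) * Mr ≤ ccr * (4 * DS ((N-1)/2)) := by
        have h3 := mul_le_mul_of_nonneg_left hDS' (by positivity : (0:ℝ) ≤ ccr * 4)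
        nlinarith [hkey]
      calc (2 - 4*ccr*η) * Mr / (N:ℝ) ≤ ccr * (4 * DS ((N-1)/2)) / (N:ℝ) := by gcongr
        _ = (ccr/(N:ℝ)) * (4 * DS ((N-1)/2)) := by ring
    refine le_trans ?_ hstep
    -- 1 - δ/2 ≤ (2 - 4 ccr η) Mr / N
    rw [le_div_iff₀ hNpos]
    have hc1 : 2 - 4*ccr*η ≥ 2 - δ/2 := by nlinarith
    have hc2 : (2 - δ/2) * (((N:ℝ) - 2)/2) ≤ (2 - 4*ccr*η) * Mr := by
      have hp : (0:ℝ) ≤ 2 - δ/2 := by linarith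
      have : ((N:ℝ) - 2)/2 ≤ Mr := by linarith
      nlinarith
    have hc3 : (1 - δ) * (N:ℝ) + δ/2 * (N:ℝ) ≤ (2 - δ/2) * (((N:ℝ) - 2)/2) + 0 := by
      have h8 : 16 ≤ (N:ℝ)*δ := by
        have := (div_le_iff₀ hδ).1 hNδ
        linarith
      nlinarith
    nlinarith
  -- deletion bound
  set r : ℝ := (N:ℝ) ^ ((2:ℝ)/5) with hrdef
  have hr1 : (1:ℝ) ≤ r := Real.one_le_rpow hN1 (by norm_num)
  set R : ℕ := ⌊r⌋₊ with hRdef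
  have hRle : (R:ℝ) ≤ r := Nat.floor_le (by linarith)
  have hRge : r ≤ (R:ℝ) + 1 := (Nat.lt_floor_add_one r).le
  have hR2 : (R:ℝ) + 1 ≤ 2*r := by linarith
  have hdel : ∑ v ∈ A ∩ S, edgeProb N ccr x v ≤ δ/2 := by
    have h1 : ∑ v ∈ A ∩ S, edgeProb N ccr x v ≤ ∑ v ∈ S, edgeProb N ccr x v :=
      Finset.sum_le_sum_of_subset_of_nonneg (Finset.inter_subset_right)
        (fun v _ _ => edgeProb_nonneg hccr.le x v)
    have h2 := sum_edgeProb_subset_le S x R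
    -- rpow arithmetic
    have hr2 : r^2 = (N:ℝ) ^ ((4:ℝ)/5) := by
      rw [hrdef, ← Real.rpow_natCast ((N:ℝ) ^ ((2:ℝ)/5)) 2, ← Real.rpow_mul hNpos.le]
      norm_num
    have hNr : (N:ℝ) = (N:ℝ) ^ (1:ℝ) := (Real.rpow_one _).symm
    have ht1 : (ccr/(N:ℝ)) * (4*((R:ℝ)+1)^2) ≤ 16 * ((N:ℝ)) ^ (-(1:ℝ)/5) := by
      have e : ((N:ℝ)) ^ ((4:ℝ)/5) / (N:ℝ) = ((N:ℝ)) ^ (-(1:ℝ)/5) := by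
        nth_rewrite 2 [hNr]
        rw [← Real.rpow_sub hNpos]
        norm_num
      have hb : ((R:ℝ)+1)^2 ≤ 4*r^2 := by nlinarith
      have : (ccr/(N:ℝ)) * (4*((R:ℝ)+1)^2) ≤ (1/(N:ℝ)) * (16*r^2) := by
        have hc : ccr/(N:ℝ) ≤ 1/(N:ℝ) := by gcongr
        have hq : (0:ℝ) ≤ 4*((R:ℝ)+1)^2 := by positivity
        have h1N : (0:ℝ) ≤ 1/(N:ℝ) := by positivity
        nlinarith
      rw [hr2] at this
      calc (ccr/(N:ℝ)) * (4*((R:ℝ)+1)^2) ≤ (1/(N:ℝ)) * (16*(N:ℝ) ^ ((4:ℝ)/5)) := this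
        _ = 16 * ((N:ℝ) ^ ((4:ℝ)/5) / (N:ℝ)) := by ring
        _ = 16 * ((N:ℝ)) ^ (-(1:ℝ)/5) := by rw [e]
    have ht2 : (ccr/(N:ℝ)) * (S.card : ℝ) / ((R:ℝ)+1)
        ≤ (C+1) * ((N:ℝ)) ^ (-(1:ℝ)/15) + ((N:ℝ)) ^ (-(7:ℝ)/5) := by
      have hcard : (S.card : ℝ) ≤ C * (N:ℝ) ^ ((4:ℝ)/3) + 1 := hScard
      have hrpos : (0:ℝ) < r := by linarith
      have hRpos : (0:ℝ) < (R:ℝ)+1 := by positivity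
      have hb : (ccr/(N:ℝ)) * (S.card : ℝ) / ((R:ℝ)+1)
          ≤ (C * (N:ℝ) ^ ((4:ℝ)/3) + 1) / ((N:ℝ) * r) := by
        rw [div_le_div_iff₀ hRpos (by positivity)]
        have hnn : (0:ℝ) ≤ (S.card : ℝ) := Nat.cast_nonneg _
        have hc : (ccr/(N:ℝ)) * (S.card : ℝ) * ((N:ℝ) * r) = ccr * r * (S.card : ℝ) := by
          rw [show (ccr/(N:ℝ)) * (S.card : ℝ) * ((N:ℝ) * r) = ccr * r * (S.card : ℝ) * ((N:ℝ) / (N:ℝ)) by ring, div_self hNpos.ne', mul_one]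
        rw [hc]
        have h1' : ccr * r * (S.card : ℝ) ≤ r * (S.card : ℝ) := by
          nlinarith [mul_nonneg (sub_nonneg.2 hccr1.le) (mul_nonneg hrpos.le hnn)]
        have h2' : r * (S.card : ℝ) ≤ (C * (N:ℝ) ^ ((4:ℝ)/3) + 1) * r := by nlinarith
        have h3' : (C * (N:ℝ) ^ ((4:ℝ)/3) + 1) * r ≤ (C * (N:ℝ) ^ ((4:ℝ)/3) + 1) * ((R:ℝ)+1) := by
          have hpos : (0:ℝ) ≤ C * (N:ℝ) ^ ((4:ℝ)/3) + 1 := by positivity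
          nlinarith
        linarith
      refine hb.trans ?_
      have e1 : (N:ℝ) * r = (N:ℝ) ^ ((7:ℝ)/5) := by
        nth_rewrite 1 [hNr]
        rw [hrdef, ← Real.rpow_add hNpos]
        norm_num
      rw [e1, add_div]
      have e2 : C * (N:ℝ) ^ ((4:ℝ)/3) / (N:ℝ) ^ ((7:ℝ)/5) = C * ((N:ℝ)) ^ (-(1:ℝ)/15) := by
        rw [mul_div_assoc, ← Real.rpow_sub hNpos]
        norm_num
      have e3 : (1:ℝ) / (N:ℝ) ^ ((7:ℝ)/5) = ((N:ℝ)) ^ (-(7:ℝ)/5) := by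
        rw [one_div, ← Real.rpow_neg hNpos.le]
        norm_num
      rw [e2, e3]
      have : C * ((N:ℝ)) ^ (-(1:ℝ)/15) ≤ (C+1) * ((N:ℝ)) ^ (-(1:ℝ)/15) := by
        have : (0:ℝ) ≤ ((N:ℝ)) ^ (-(1:ℝ)/15) := by positivity
        nlinarith
      linarith
    calc ∑ v ∈ A ∩ S, edgeProb N ccr x v ≤ ∑ v ∈ S, edgeProb N ccr x v := h1
      _ ≤ (ccr/(N:ℝ)) * (4*((R:ℝ)+1)^2) + (ccr/(N:ℝ)) * (S.card : ℝ) / ((R:ℝ)+1) := h2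
      _ ≤ 16 * ((N:ℝ)) ^ (-(1:ℝ)/5) + ((C+1) * ((N:ℝ)) ^ (-(1:ℝ)/15) + ((N:ℝ)) ^ (-(7:ℝ)/5)) := by
          linarith
      _ ≤ δ/2 := by linarith [hDel]
  rw [hZeq]
  have : ∑ v ∈ A \ S, edgeProb N ccr x v
      = ∑ v ∈ A, edgeProb N ccr x v - ∑ v ∈ A ∩ S, edgeProb N ccr x v := by
    linarith [hsplit]
  rw [this]
  linarith [hfull, hfull2, hdel]

end ZBound

section Walk
variable {N : ℕ} [NeZero N]

lemma ZNA_nonneg (S : Finset (Vtx N)) (u : Vtx N) : 0 ≤ ZNA N ccr S u :=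
  Finset.sum_nonneg fun v _ => edgeProb_nonneg ccr_pos.le u v

lemma transPA_nonneg (S : Finset (Vtx N)) (u v : Vtx N) : 0 ≤ transPA N ccr S u v := by
  unfold transPA
  split_ifs with h
  · exact le_refl 0
  · exact div_nonneg (edgeProb_nonneg ccr_pos.le u v) (ZNA_nonneg S u)

lemma transPA_rowsum_le (S : Finset (Vtx N)) (u : Vtx N) :
    ∑ v : Vtx N, transPA N ccr S u v ≤ 1 := by
  classical
  have h1 : ∑ v : Vtx N, transPA N ccr S u v
      = (∑ v ∈ (univ : Finset (Vtx N)) \ S, edgeProb N ccr u v) / ZNA N ccr S u := by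
    unfold transPA
    have e : ∀ v : Vtx N, (if v ∈ S then 0 else edgeProb N ccr u v / ZNA N ccr S u)
        = if v ∉ S then edgeProb N ccr u v / ZNA N ccr S u else 0 := fun v => by
      by_cases h : v ∈ S <;> simp [h]
    rw [Finset.sum_congr rfl (fun v _ => e v), ← Finset.sum_filter, ← Finset.sum_div]
    congr 1
    refine Finset.sum_congr ?_ (fun _ _ => rfl)
    rw [Finset.sdiff_eq_filter]
  have h2 : ∑ v ∈ (univ : Finset (Vtx N)) \ S, edgeProb N ccr u v = ZNA N ccr S u := by
    unfold ZNA
    rw [Finset.sum_erase _ (by simp [edgeProb])]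
  rw [h1, h2]
  rcases eq_or_lt_of_le (ZNA_nonneg S u) with hz | hz
  · rw [← hz]
    simp
  · rw [div_self hz.ne']

lemma memQ_nonneg (c : ℝ) (A : ℕ → Finset (Vtx N)) (i m : ℕ) (H : Finset (Vtx N))
    (x b : Vtx N) (hc : c = ccr) : 0 ≤ memQ N c A i m H x b := by
  induction m generalizing i H x with
  | zero =>
    unfold memQ
    split_ifs <;> norm_num
  | succ m ih =>
    unfold memQ
    refine Finset.sum_nonneg fun y _ => mul_nonneg ?_ (ih _ _ _)
    rw [hc]
    exact transPA_nonneg _ x y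

lemma memQ_one_eq (A : ℕ → Finset (Vtx N)) (i : ℕ) (H : Finset (Vtx N)) (x b : Vtx N) :
    memQ N ccr A i 1 H x b = transPA N ccr (A i ∪ H) x b := by
  show (∑ y : Vtx N, transPA N ccr (A i ∪ H) x y * memQ N ccr A (i+1) 0 (insert y H) y b) = _
  have e : ∀ y : Vtx N, transPA N ccr (A i ∪ H) x y * memQ N ccr A (i+1) 0 (insert y H) y b
      = if y = b then transPA N ccr (A i ∪ H) x y else 0 := by
    intro y
    show transPA N ccr (A i ∪ H) x y * (if y = b then 1 else 0) = _
    split_ifs <;> ring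
  rw [Finset.sum_congr rfl (fun y _ => e y)]
  rw [Finset.sum_ite_eq' (univ : Finset (Vtx N)) b (fun y => transPA N ccr (A i ∪ H) x y)]
  simp

lemma transPA_le_div (S : Finset (Vtx N)) (u v : Vtx N) {δ : ℝ} (hδ1 : δ < 1)
    (hZ : 1 - δ ≤ ZNA N ccr S u) :
    transPA N ccr S u v ≤ edgeProb N ccr u v / (1 - δ) := by
  unfold transPA
  have hpos : (0:ℝ) < 1 - δ := by linarith
  split_ifs with h
  · exact div_nonneg (edgeProb_nonneg ccr_pos.le u v) hpos.le
  · exact div_le_div_of_nonneg_left (edgeProb_nonneg ccr_pos.le u v) hpos hZ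

/-- Main induction: for `m ≥ 2` the memory walk kernel is bounded by `B`. -/
lemma memQ_le_B (A : ℕ → Finset (Vtx N)) (j : ℕ) {δ B : ℝ} (hδ0 : 0 ≤ δ) (hδ1 : δ < 1)
    (hB : 0 ≤ B)
    (hZ : ∀ i : ℕ, ∀ H : Finset (Vtx N), ∀ x : Vtx N, 1 ≤ i → i ≤ j → H.card ≤ j →
      1 - δ ≤ ZNA N ccr (A i ∪ H) x)
    (hTwo : ∀ x b : Vtx N, ∑ y : Vtx N, edgeProb N ccr x y * edgeProb N ccr y b
      ≤ (1-δ)^2 * B) :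
    ∀ m : ℕ, 2 ≤ m → ∀ i : ℕ, ∀ H : Finset (Vtx N), ∀ x b : Vtx N,
      1 ≤ i → i + m ≤ j + 1 → H.card + m ≤ j + 1 →
      memQ N ccr A i m H x b ≤ B := by
  have hpos : (0:ℝ) < 1 - δ := by linarith
  intro m hm
  induction m, hm using Nat.le_induction with
  | base =>
    intro i H x b hi hij hHj
    show (∑ y : Vtx N, transPA N ccr (A i ∪ H) x y * memQ N ccr A (i+1) 1 (insert y H) y b) ≤ B
    have hb1 : ∀ y : Vtx N, transPA N ccr (A i ∪ H) x y ≤ edgeProb N ccr x y / (1-δ) := by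
      intro y
      refine transPA_le_div _ _ _ hδ1 (hZ i H x hi (by omega) (by omega))
    have hb2 : ∀ y : Vtx N, memQ N ccr A (i+1) 1 (insert y H) y b
        ≤ edgeProb N ccr y b / (1-δ) := by
      intro y
      rw [memQ_one_eq]
      refine transPA_le_div _ _ _ hδ1 (hZ (i+1) (insert y H) y (by omega) (by omega) ?_)
      calc (insert y H).card ≤ H.card + 1 := Finset.card_insert_le _ _
        _ ≤ j := by omega
    calc ∑ y : Vtx N, transPA N ccr (A i ∪ H) x y * memQ N ccr A (i+1) 1 (insert y H) y b
        ≤ ∑ y : Vtx N, (edgeProb N ccr x y / (1-δ)) * (edgeProb N ccr y b / (1-δ)) := by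
          refine Finset.sum_le_sum fun y _ => ?_
          refine mul_le_mul (hb1 y) (hb2 y) (memQ_nonneg _ _ _ _ _ _ _ rfl) ?_
          exact div_nonneg (edgeProb_nonneg ccr_pos.le x y) hpos.le
      _ = (∑ y : Vtx N, edgeProb N ccr x y * edgeProb N ccr y b) / (1-δ)^2 := by
          rw [Finset.sum_div]
          refine Finset.sum_congr rfl fun y _ => ?_
          rw [div_mul_div_comm, sq]
      _ ≤ B := by
          rw [div_le_iff₀ (by positivity)]
          have := hTwo x b
          nlinarith [sq_nonneg (1-δ)]
  | succ m hm2 ih =>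
    intro i H x b hi hij hHj
    show (∑ y : Vtx N, transPA N ccr (A i ∪ H) x y * memQ N ccr A (i+1) m (insert y H) y b) ≤ B
    have hstep : ∀ y : Vtx N, memQ N ccr A (i+1) m (insert y H) y b ≤ B := by
      intro y
      refine ih (i+1) (insert y H) y b (by omega) (by omega) ?_
      calc (insert y H).card + m ≤ (H.card + 1) + m := by
            have := Finset.card_insert_le y H
            omega
        _ ≤ j + 1 := by omega
    calc ∑ y : Vtx N, transPA N ccr (A i ∪ H) x y * memQ N ccr A (i+1) m (insert y H) y b
        ≤ ∑ y : Vtx N, transPA N ccr (A i ∪ H) x y * B := by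
          refine Finset.sum_le_sum fun y _ => ?_
          exact mul_le_mul_of_nonneg_left (hstep y) (transPA_nonneg _ x y)
      _ = (∑ y : Vtx N, transPA N ccr (A i ∪ H) x y) * B := by rw [Finset.sum_mul]
      _ ≤ 1 * B := mul_le_mul_of_nonneg_right (transPA_rowsum_le _ x) hB
      _ = B := one_mul B

end Walk


set_option maxHeartbeats 1600000 in
/-- Let `c = c^cr`. For all `T > 0`, `K > 0` and every `ε > 0` there is `N₀` such that
for every `N ≥ N₀`, every `j` with `1 ≤ j ≤ T·N^{4/3}`, every nondecreasing sequence
`𝐀 = (A₁ ⊆ … ⊆ A_j)` with `|A_j| ≤ K·N^{4/3}`, every `a ∈ V_N` and every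
`b ∈ V_N ∖ (A_j ∪ {a})`:
`Q(𝐀,j;a,b) ≤ (1 + ε)·max(4c²·(log N)/N², p(a,b))`. -/
theorem stmt19 (T : ℝ) (hT : 0 < T) (K : ℝ) (hK : 0 < K) (ε : ℝ) (hε : 0 < ε) :
    ∃ N₀ : ℕ, ∀ (N : ℕ) [NeZero N], N₀ ≤ N →
      ∀ j : ℕ, 1 ≤ j → (j : ℝ) ≤ T * (N : ℝ) ^ ((4 : ℝ) / 3) →
        ∀ A : ℕ → Finset (Vtx N),
          (∀ i i' : ℕ, 1 ≤ i → i ≤ i' → i' ≤ j → A i ⊆ A i') →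
          ((A j).card : ℝ) ≤ K * (N : ℝ) ^ ((4 : ℝ) / 3) →
          ∀ a b : Vtx N, b ∉ A j → b ≠ a →
            kernelQ N ccr A j a b ≤
              (1 + ε) * max (4 * ccr ^ 2 * Real.log N / (N : ℝ) ^ 2)
                (edgeProb N ccr a b) := by
  classical
  set ε' : ℝ := min ε 1 with hε'def
  have hε'0 : 0 < ε' := lt_min hε one_pos
  have hε'1 : ε' ≤ 1 := min_le_right _ _
  have hε'ε : ε' ≤ ε := min_le_left _ _
  set δ : ℝ := ε'/20 with hδdef
  have hδ0 : 0 < δ := by positivity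
  have hδ1 : δ < 1 := by
    rw [hδdef]
    linarith
  have hδle1 : δ ≤ 1 := hδ1.le
  -- eventual facts
  have F1 := Z_lower (K + T) (by linarith) hδ0 hδle1
  have F2 : ∀ᶠ N : ℕ in Filter.atTop, 6/ε' ≤ Real.log N :=
    (Real.tendsto_log_atTop.comp (tendsto_natCast_atTop_atTop (R := ℝ))).eventually
      (Filter.eventually_ge_atTop (6/ε'))
  have F3 : ∀ᶠ N : ℕ in Filter.atTop, 2 ≤ N := Filter.eventually_ge_atTop 2
  obtain ⟨N₀, hN₀⟩ := Filter.eventually_atTop.1 ((F1.and F2).and F3)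
  refine ⟨N₀, ?_⟩
  intro N instN hN j hj1 hjT A hmono hcard a b hbA hba
  obtain ⟨⟨hZall, hlogN⟩, hN2⟩ := hN₀ N hN
  have hNpos : (0:ℝ) < (N:ℝ) := by
    have : 0 < N := by omega
    exact_mod_cast this
  have hN1 : (1:ℝ) ≤ (N:ℝ) := by
    have : 1 ≤ N := by omega
    exact_mod_cast this
  have hlog0 : 0 ≤ Real.log N := Real.log_nonneg hN1
  have hccr := ccr_pos
  have hpos1δ : (0:ℝ) < 1 - δ := by linarith
  -- Z lower bound specialized
  have hZ' : ∀ i : ℕ, ∀ H : Finset (Vtx N), ∀ x : Vtx N, 1 ≤ i → i ≤ j → H.card ≤ j →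
      1 - δ ≤ ZNA N ccr (A i ∪ H) x := by
    intro i H x hi hij hHj
    refine hZall instN (A i ∪ H) x ?_
    have hsub : A i ⊆ A j := hmono i j hi hij le_rfl
    have hc1 : (A i ∪ H).card ≤ (A j).card + j := by
      calc (A i ∪ H).card ≤ (A i).card + H.card := Finset.card_union_le _ _
        _ ≤ (A j).card + j := by
            have := Finset.card_le_card hsub
            omega
    have hc2 : ((A i ∪ H).card : ℝ) ≤ ((A j).card : ℝ) + (j:ℝ) := by exact_mod_cast hc1
    have : ((A j).card : ℝ) + (j:ℝ) ≤ K * (N:ℝ) ^ ((4:ℝ)/3) + T * (N:ℝ) ^ ((4:ℝ)/3) := by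
      linarith
    calc ((A i ∪ H).card : ℝ) ≤ K * (N:ℝ) ^ ((4:ℝ)/3) + T * (N:ℝ) ^ ((4:ℝ)/3) := by linarith
      _ = (K + T) * (N:ℝ) ^ ((4:ℝ)/3) := by ring
      _ ≤ (K + T) * (N:ℝ) ^ ((4:ℝ)/3) + 1 := by linarith
  -- the max is nonnegative
  have hmax0 : 0 ≤ max (4 * ccr ^ 2 * Real.log N / (N : ℝ) ^ 2) (edgeProb N ccr a b) :=
    le_trans (by positivity) (le_max_left _ _)
  have hεmax : (1 + ε') * max (4 * ccr ^ 2 * Real.log N / (N : ℝ) ^ 2) (edgeProb N ccr a b)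
      ≤ (1 + ε) * max (4 * ccr ^ 2 * Real.log N / (N : ℝ) ^ 2) (edgeProb N ccr a b) := by
    nlinarith
  rcases eq_or_lt_of_le hj1 with hj1' | hj2
  · -- j = 1
    have hj : j = 1 := hj1'.symm
    subst hj
    have e1 : kernelQ N ccr A 1 a b = transPA N ccr (A 1 ∪ {a}) a b := by
      unfold kernelQ
      rw [memQ_one_eq]
    rw [e1]
    have h2 : transPA N ccr (A 1 ∪ {a}) a b ≤ edgeProb N ccr a b / (1-δ) :=
      transPA_le_div _ _ _ hδ1 (hZ' 1 {a} a le_rfl le_rfl (by simp))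
    have hp0 : 0 ≤ edgeProb N ccr a b := edgeProb_nonneg hccr.le a b
    have hfac : (1:ℝ) ≤ (1+ε')*(1-δ) := by
      rw [hδdef]
      nlinarith [mul_le_mul_of_nonneg_left hε'1 hε'0.le]
    have h3 : edgeProb N ccr a b / (1-δ) ≤ (1 + ε') * edgeProb N ccr a b := by
      rw [div_le_iff₀ hpos1δ]
      nlinarith [mul_le_mul_of_nonneg_left hfac hp0]
    calc transPA N ccr (A 1 ∪ {a}) a b ≤ edgeProb N ccr a b / (1-δ) := h2
      _ ≤ (1 + ε') * edgeProb N ccr a b := h3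
      _ ≤ (1 + ε') * max (4 * ccr ^ 2 * Real.log N / (N : ℝ) ^ 2) (edgeProb N ccr a b) := by
          nlinarith [le_max_right (4 * ccr ^ 2 * Real.log N / (N : ℝ) ^ 2) (edgeProb N ccr a b)]
      _ ≤ _ := hεmax
  · -- j ≥ 2
    set B : ℝ := (ccr/(N:ℝ))^2 * (4 * Real.log N + 12) / (1-δ)^2 with hBdef
    have hB0 : 0 ≤ B := by positivity
    have hTwo : ∀ x b : Vtx N, ∑ y : Vtx N, edgeProb N ccr x y * edgeProb N ccr y b
        ≤ (1-δ)^2 * B := by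
      intro x b
      have e : (1-δ)^2 * B = (ccr/(N:ℝ))^2 * (4 * Real.log N + 12) := by
        rw [hBdef]
        have h0 : ((1:ℝ)-δ) ≠ 0 := hpos1δ.ne'
        field_simp
      exact (two_step_bound x b).trans_eq e.symm
    have hQ : kernelQ N ccr A j a b ≤ B := by
      unfold kernelQ
      exact memQ_le_B A j hδ0.le hδ1 hB0 hZ' hTwo j hj2 1 {a} a b le_rfl (by omega)
        (by simp; omega)
    refine hQ.trans ?_
    -- B ≤ (1+ε') * 4 ccr² log N / N²
    have hstep1 : 4 * Real.log N + 12 ≤ (1 + ε'/2) * (4 * Real.log N) := by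
      have : 12 ≤ 2 * ε' * Real.log N := by
        have := (div_le_iff₀ hε'0).1 hlogN
        nlinarith
      nlinarith
    have hstep2 : (1 + ε'/2) ≤ (1 + ε') * (1-δ)^2 := by
      rw [hδdef]
      nlinarith [mul_le_mul_of_nonneg_left hε'1 hε'0.le, pow_nonneg hε'0.le 3, sq_nonneg ε']
    have hBle : B ≤ (1 + ε') * (4 * ccr ^ 2 * Real.log N / (N : ℝ) ^ 2) := by
      rw [hBdef, div_le_iff₀ (by positivity : (0:ℝ) < (1-δ)^2)]
      have e : (ccr/(N:ℝ))^2 * ((1 + ε'/2) * (4 * Real.log N))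
          = (1 + ε'/2) * (4 * ccr ^ 2 * Real.log N / (N : ℝ) ^ 2) := by
        field_simp
      calc (ccr/(N:ℝ))^2 * (4 * Real.log N + 12)
          ≤ (ccr/(N:ℝ))^2 * ((1 + ε'/2) * (4 * Real.log N)) := by
            have h9 : (0:ℝ) ≤ (ccr/(N:ℝ))^2 := sq_nonneg _
            nlinarith
        _ = (1 + ε'/2) * (4 * ccr ^ 2 * Real.log N / (N : ℝ) ^ 2) := e
        _ ≤ ((1 + ε') * (1-δ)^2) * (4 * ccr ^ 2 * Real.log N / (N : ℝ) ^ 2) := by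
            have h9 : (0:ℝ) ≤ 4 * ccr ^ 2 * Real.log N / (N : ℝ) ^ 2 := by positivity
            nlinarith
        _ = (1 + ε') * (4 * ccr ^ 2 * Real.log N / (N : ℝ) ^ 2) * (1-δ)^2 := by ring
    refine hBle.trans ?_
    calc (1 + ε') * (4 * ccr ^ 2 * Real.log N / (N : ℝ) ^ 2)
        ≤ (1 + ε') * max (4 * ccr ^ 2 * Real.log N / (N : ℝ) ^ 2) (edgeProb N ccr a b) := by
          nlinarith [le_max_left (4 * ccr ^ 2 * Real.log N / (N : ℝ) ^ 2) (edgeProb N ccr a b)]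
      _ ≤ _ := hεmax
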